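/- Let 0 < a < 1 and define the probability measure ν on [0,1] by ν = (1−a) Σ_{i=0}^∞ (a^i / (a^{i²} − a^{(i+1)²})) 𝔏¹|_{[a^{(i+1)²}, a^{i²}]}, where 𝔏¹ is Lebesgue measure. Then the correlation dimension of ν is 0, i.e., lim_{r→0} log(∫ ν(B(x,r)) dν(x)) / log r = 0. -/

import Mathlib

open MeasureTheory Filter Set Metric
open scoped ENNReal NNReal Topology

/-- The Mattila–Morán–Rey measure
`ν = (1−a) Σ_{i=0}^∞ (a^i/(a^{i²}−a^{(i+1)²})) 𝔏¹|_{[a^{(i+1)²}, a^{i²}]}`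
has correlation dimension `0`. -/
theorem correlation_dim_MMR_measure_eq_zero (a : ℝ) (ha : a ∈ Set.Ioo (0:ℝ) 1)
    (ν : Measure ℝ)
    (hν : ν = Measure.sum (fun i : ℕ =>
      ENNReal.ofReal ((1 - a) * a ^ i / (a ^ (i ^ 2) - a ^ ((i + 1) ^ 2))) •
        volume.restrict (Set.Icc (a ^ ((i + 1) ^ 2)) (a ^ (i ^ 2))))) :
    Tendsto (fun r : ℝ => Real.log (∫ x, (ν (ball x r)).toReal ∂ν) / Real.log r)
      (nhdsWithin 0 (Set.Ioi 0)) (nhds 0) := by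
  obtain ⟨ha0, ha1⟩ := ha
  have h1a : 0 < 1 - a := by linarith
  have hd : ∀ i : ℕ, 0 < a ^ (i ^ 2) - a ^ ((i + 1) ^ 2) := fun i =>
    sub_pos.2 (pow_lt_pow_right_of_lt_one₀ ha0 ha1 (Nat.pow_lt_pow_left (Nat.lt_succ_self i) two_ne_zero))
  have hc : ∀ i : ℕ, 0 < (1 - a) * a ^ i := fun i => mul_pos h1a (pow_pos ha0 i)
  -- each summand applied to a measurable set `s`
  have hterm : ∀ (i : ℕ) (s : Set ℝ), MeasurableSet s →
      (ENNReal.ofReal ((1 - a) * a ^ i / (a ^ (i ^ 2) - a ^ ((i + 1) ^ 2))) •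
        volume.restrict (Set.Icc (a ^ ((i + 1) ^ 2)) (a ^ (i ^ 2)))) s =
      ENNReal.ofReal ((1 - a) * a ^ i / (a ^ (i ^ 2) - a ^ ((i + 1) ^ 2))) *
        volume (s ∩ Set.Icc (a ^ ((i + 1) ^ 2)) (a ^ (i ^ 2))) := by
    intro i s hs
    rw [Measure.smul_apply, Measure.restrict_apply hs, smul_eq_mul]
  have hmass : ∀ i : ℕ,
      ENNReal.ofReal ((1 - a) * a ^ i / (a ^ (i ^ 2) - a ^ ((i + 1) ^ 2))) *
        volume (Set.Icc (a ^ ((i + 1) ^ 2)) (a ^ (i ^ 2))) =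
      ENNReal.ofReal ((1 - a) * a ^ i) := by
    intro i
    rw [Real.volume_Icc, ← ENNReal.ofReal_mul (div_nonneg (hc i).le (hd i).le),
      div_mul_cancel₀ _ (hd i).ne']
  have huniv : ν Set.univ = 1 := by
    rw [hν, Measure.sum_apply _ MeasurableSet.univ]
    have h1 : ∀ i : ℕ,
        (ENNReal.ofReal ((1 - a) * a ^ i / (a ^ (i ^ 2) - a ^ ((i + 1) ^ 2))) •
          volume.restrict (Set.Icc (a ^ ((i + 1) ^ 2)) (a ^ (i ^ 2)))) Set.univ =
        ENNReal.ofReal ((1 - a) * a ^ i) := by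
      intro i
      rw [hterm i _ MeasurableSet.univ, Set.univ_inter, hmass i]
    simp_rw [h1]
    rw [← ENNReal.ofReal_tsum_of_nonneg (fun i => (hc i).le)
      ((summable_geometric_of_lt_one ha0.le ha1).mul_left _)]
    rw [tsum_mul_left, tsum_geometric_of_lt_one ha0.le ha1,
      mul_inv_cancel₀ h1a.ne', ENNReal.ofReal_one]
  have hI : ∀ i : ℕ, ENNReal.ofReal ((1 - a) * a ^ i) ≤
      ν (Set.Icc (a ^ ((i + 1) ^ 2)) (a ^ (i ^ 2))) := by
    intro i
    rw [hν, Measure.sum_apply _ measurableSet_Icc]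
    refine le_trans (le_of_eq ?_) (ENNReal.le_tsum i)
    rw [hterm i _ measurableSet_Icc, Set.inter_self, hmass i]
  haveI : IsProbabilityMeasure ν := ⟨huniv⟩
  -- constants
  set L : ℝ := -Real.log a with hLdef
  have hL : 0 < L := by
    rw [hLdef]; linarith [Real.log_neg ha0 ha1]
  set p : ℝ := -(2 * Real.log (1 - a)) with hpdef
  have hp : 0 < p := by
    rw [hpdef]; have := Real.log_neg h1a (by linarith); linarith
  set q : ℝ := 2 * L with hqdef
  have hq : 0 < q := by rw [hqdef]; linarith
  -- the bounding sequence tends to 0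
  have hB : Tendsto (fun n : ℕ => (p + q * n) / (((n : ℝ) - 1) ^ 2 * L)) atTop (𝓝 0) := by
    have hC : Tendsto (fun n : ℕ => (4 * (p + q) / L) * (1 / (n : ℝ))) atTop (𝓝 0) := by
      simpa using tendsto_one_div_atTop_nhds_zero_nat.const_mul (4 * (p + q) / L)
    refine squeeze_zero' ?_ ?_ hC
    · filter_upwards [eventually_ge_atTop 2] with n hn
      have h2 : (2 : ℝ) ≤ n := by exact_mod_cast hn
      have hden : 0 < ((n : ℝ) - 1) ^ 2 * L := mul_pos (by nlinarith) hL
      exact div_nonneg (by nlinarith) hden.le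
    · filter_upwards [eventually_ge_atTop 2] with n hn
      have h2 : (2 : ℝ) ≤ n := by exact_mod_cast hn
      have hden : 0 < ((n : ℝ) - 1) ^ 2 * L := mul_pos (by nlinarith) hL
      have hn0 : 0 < (n : ℝ) := by linarith
      rw [mul_one_div, div_le_div_iff₀ hden hn0]
      have hfld : (4 * (p + q) / L) * (((n : ℝ) - 1) ^ 2 * L) =
          4 * (p + q) * ((n : ℝ) - 1) ^ 2 := by
        field_simp
      rw [hfld]
      nlinarith [mul_nonneg hp.le (mul_nonneg hn0.le (by linarith : (0:ℝ) ≤ (n:ℝ) - 1)),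
        mul_nonneg (mul_nonneg hp.le hn0.le) hn0.le,
        mul_nonneg (mul_nonneg hq.le hn0.le) hn0.le,
        sq_nonneg ((n : ℝ) - 2)]
  rw [Metric.tendsto_nhds]
  intro ε hε
  obtain ⟨i₁, hi₁⟩ := eventually_atTop.1 (hB.eventually (gt_mem_nhds hε))
  set i₀ : ℕ := max i₁ 2 with hi₀def
  have hδ : 0 < a ^ (i₀ ^ 2) := pow_pos ha0 _
  have hδ1 : a ^ (i₀ ^ 2) < 1 := pow_lt_one₀ ha0.le ha1 (by positivity)
  filter_upwards [Ioo_mem_nhdsGT_of_mem (show (0:ℝ) ∈ Set.Ico (0:ℝ) (a ^ (i₀ ^ 2)) from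
    ⟨le_refl _, hδ⟩)] with r hr
  obtain ⟨hr0, hrδ⟩ := hr
  -- choose the least i with a^(i²) < r
  have hex : ∃ n : ℕ, a ^ (n ^ 2) < r := by
    obtain ⟨n, hn⟩ := exists_pow_lt_of_lt_one hr0 ha1
    exact ⟨n, lt_of_le_of_lt
      (pow_le_pow_of_le_one ha0.le ha1.le (Nat.le_self_pow two_ne_zero n)) hn⟩
  set i : ℕ := Nat.find hex with hidef
  have hilt : a ^ (i ^ 2) < r := Nat.find_spec hex
  have hii₀ : i₀ ≤ i := by
    by_contra h
    push_neg at h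
    have : a ^ (i₀ ^ 2) ≤ a ^ (i ^ 2) :=
      pow_le_pow_of_le_one ha0.le ha1.le (Nat.pow_le_pow_left h.le 2)
    linarith
  have hi2 : 2 ≤ i := le_trans (le_max_right _ _) hii₀
  have hprev : r ≤ a ^ ((i - 1) ^ 2) := le_of_not_gt (Nat.find_min hex (by omega))
  -- the interval
  have hsub : ∀ x ∈ Set.Icc (a ^ ((i + 1) ^ 2)) (a ^ (i ^ 2)),
      Set.Icc (a ^ ((i + 1) ^ 2)) (a ^ (i ^ 2)) ⊆ ball x r := by
    intro x hx y hy
    rw [mem_ball, Real.dist_eq, abs_sub_lt_iff]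
    have h5 : 0 < a ^ ((i + 1) ^ 2) := pow_pos ha0 _
    obtain ⟨h1, h2⟩ := hx
    obtain ⟨h3, h4⟩ := hy
    constructor <;> linarith
  have hballν : ∀ x ∈ Set.Icc (a ^ ((i + 1) ^ 2)) (a ^ (i ^ 2)),
      ENNReal.ofReal ((1 - a) * a ^ i) ≤ ν (ball x r) :=
    fun x hx => le_trans (hI i) (measure_mono (hsub x hx))
  -- measurability / integrability
  have hSopen : IsOpen {z : ℝ × ℝ | dist z.2 z.1 < r} :=
    isOpen_lt (continuous_snd.dist continuous_fst) continuous_const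
  have hmeas : Measurable fun x => ν (ball x r) := by
    have := measurable_measure_prodMk_left_finite (ν := ν) hSopen.measurableSet
    exact this
  have hle1 : ∀ x : ℝ, (ν (ball x r)).toReal ≤ 1 := fun x => by
    calc (ν (ball x r)).toReal ≤ (1 : ℝ≥0∞).toReal :=
          ENNReal.toReal_mono ENNReal.one_ne_top prob_le_one
      _ = 1 := ENNReal.toReal_one
  have hint : Integrable (fun x => (ν (ball x r)).toReal) ν := by
    refine ⟨hmeas.ennreal_toReal.aestronglyMeasurable, ?_⟩
    apply HasFiniteIntegral.of_bounded (C := 1)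
    filter_upwards with x
    rw [Real.norm_eq_abs, abs_of_nonneg ENNReal.toReal_nonneg]
    exact hle1 x
  set c : ℝ := (1 - a) * a ^ i with hcdef
  have hc0 : 0 < c := hc i
  have hcI : c ≤ (ν (Set.Icc (a ^ ((i + 1) ^ 2)) (a ^ (i ^ 2)))).toReal := by
    calc c = (ENNReal.ofReal c).toReal := (ENNReal.toReal_ofReal hc0.le).symm
      _ ≤ _ := ENNReal.toReal_mono (measure_ne_top ν _) (hI i)
  have hlow : c ^ 2 ≤ ∫ x, (ν (ball x r)).toReal ∂ν := by
    have h1 : c * (ν (Set.Icc (a ^ ((i + 1) ^ 2)) (a ^ (i ^ 2)))).toReal ≤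
        ∫ x in Set.Icc (a ^ ((i + 1) ^ 2)) (a ^ (i ^ 2)), (ν (ball x r)).toReal ∂ν := by
      refine setIntegral_ge_of_const_le_real measurableSet_Icc (measure_ne_top ν _)
        (fun x hx => ?_) hint.integrableOn
      calc c = (ENNReal.ofReal c).toReal := (ENNReal.toReal_ofReal hc0.le).symm
        _ ≤ _ := ENNReal.toReal_mono (measure_ne_top ν _) (hballν x hx)
    calc c ^ 2 = c * c := sq c
      _ ≤ c * (ν (Set.Icc (a ^ ((i + 1) ^ 2)) (a ^ (i ^ 2)))).toReal :=
          mul_le_mul_of_nonneg_left hcI hc0.le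
      _ ≤ ∫ x in Set.Icc (a ^ ((i + 1) ^ 2)) (a ^ (i ^ 2)), (ν (ball x r)).toReal ∂ν := h1
      _ ≤ ∫ x, (ν (ball x r)).toReal ∂ν :=
          setIntegral_le_integral hint (ae_of_all _ fun x => ENNReal.toReal_nonneg)
  have hup : ∫ x, (ν (ball x r)).toReal ∂ν ≤ 1 := by
    calc ∫ x, (ν (ball x r)).toReal ∂ν ≤ ∫ _, (1 : ℝ) ∂ν :=
          integral_mono hint (integrable_const 1) hle1
      _ = 1 := by simp
  set Ir : ℝ := ∫ x, (ν (ball x r)).toReal ∂ν with hIrdef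
  have hIr0 : 0 < Ir := lt_of_lt_of_le (pow_pos hc0 2) hlow
  have hlogIr : Real.log Ir ≤ 0 := Real.log_nonpos hIr0.le hup
  have hr1 : r < 1 := lt_trans hrδ hδ1
  have hlogr : Real.log r < 0 := Real.log_neg hr0 hr1
  have hratio0 : 0 ≤ Real.log Ir / Real.log r :=
    div_nonneg_iff.2 (Or.inr ⟨hlogIr, hlogr.le⟩)
  have hlogc : -Real.log Ir ≤ p + q * i := by
    have h1 : Real.log (c ^ 2) ≤ Real.log Ir := Real.log_le_log (pow_pos hc0 2) hlow
    have h2 : Real.log (c ^ 2) = 2 * (Real.log (1 - a) + (i : ℝ) * Real.log a) := by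
      rw [Real.log_pow, hcdef, Real.log_mul h1a.ne' (pow_ne_zero i ha0.ne'), Real.log_pow]
      push_cast; ring
    rw [hpdef, hqdef, hLdef]
    push_cast
    linarith
  have h1i : ((i - 1 : ℕ) : ℝ) = (i : ℝ) - 1 := by
    have := Nat.cast_sub (show 1 ≤ i by omega) (R := ℝ)
    simpa using this
  have hlogrlow : ((i : ℝ) - 1) ^ 2 * L ≤ -Real.log r := by
    have h1 : Real.log r ≤ Real.log (a ^ ((i - 1) ^ 2)) := Real.log_le_log hr0 hprev
    rw [Real.log_pow] at h1
    have hcast : (((i - 1) ^ 2 : ℕ) : ℝ) = ((i : ℝ) - 1) ^ 2 := by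
      rw [Nat.cast_pow, h1i]
    rw [hcast] at h1
    rw [hLdef]
    linarith
  have hdenpos : 0 < ((i : ℝ) - 1) ^ 2 * L := by
    have h2i : (2 : ℝ) ≤ i := by exact_mod_cast hi2
    exact mul_pos (by nlinarith) hL
  have hfinal : Real.log Ir / Real.log r ≤ (p + q * i) / (((i : ℝ) - 1) ^ 2 * L) := by
    rw [← neg_div_neg_eq]
    exact div_le_div₀ (by positivity) hlogc hdenpos hlogrlow
  have hBi : (p + q * i) / (((i : ℝ) - 1) ^ 2 * L) < ε :=
    hi₁ i (le_trans (le_max_left _ _) hii₀)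
  rw [Real.dist_eq, sub_zero, abs_of_nonneg hratio0]
  exact lt_of_le_of_lt hfinal hBi
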